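/- Let α ∈ (0, 1/2), a = 1 − 2α and b = 1/α − 2 (so a, b > 0). Define the modified ELU function R : ℝ → ℝ by R(z) = (z²/2 + a·z)/(z + b) for z > 0 and R(z) = α·(exp(z) − 1) for z ≤ 0. Then R is twice continuously differentiable on ℝ, and R'(0) = R''(0) = α. -/

import Mathlib

/-- The modified ELU (MELU) activation with hyperparameter `α ∈ (0, 1/2)`,
`a = 1 - 2α`, `b = 1/α - 2`, is twice continuously differentiable on `ℝ`,
with `R'(0) = R''(0) = α`. -/
theorem melu_C2 (α a b : ℝ) (hα : 0 < α) (hα' : α < 1/2)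
    (ha : a = 1 - 2*α) (hb : b = 1/α - 2)
    (R : ℝ → ℝ)
    (hR : ∀ z : ℝ, R z = if 0 < z then (z^2/2 + a*z)/(z + b)
                         else α * (Real.exp z - 1)) :
    ContDiff ℝ 2 R ∧ deriv R 0 = α ∧ deriv (deriv R) 0 = α := by
  have hα0 : α ≠ 0 := ne_of_gt hα
  have hb0 : 0 < b := by
    rw [hb]
    have : 2 < 1/α := by
      rw [lt_div_iff₀ hα]; linarith
    linarith
  have hbne : b ≠ 0 := ne_of_gt hb0
  have hab : a = α * b := by
    rw [ha, hb]; field_simp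
  -- the pieces
  set f : ℝ → ℝ := fun z => (z^2/2 + a*z)/(z + b) with hf
  set f1 : ℝ → ℝ := fun z => (z^2/2 + b*z + a*b)/(z + b)^2 with hf1
  set f2 : ℝ → ℝ := fun z => b*(b - 2*a)/(z + b)^3 with hf2
  set e0 : ℝ → ℝ := fun z => α * (Real.exp z - 1) with he0
  set e1 : ℝ → ℝ := fun z => α * Real.exp z with he1
  set g : ℝ → ℝ := fun z => if 0 < z then f1 z else e1 z with hg
  set h : ℝ → ℝ := fun z => if 0 < z then f2 z else e1 z with hh
  have hRf : R = fun z => if 0 < z then f z else e0 z := funext hR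
  -- matching values at 0
  have hf0 : f 0 = 0 := by simp [hf]
  have he00 : e0 0 = 0 := by simp [he0]
  have hf10 : f1 0 = α := by
    simp only [hf1]
    rw [hab]; field_simp; ring
  have he10 : e1 0 = α := by simp [he1]
  have hba : α * b = 1 - 2*α := by rw [← hab, ha]
  have hf20 : f2 0 = α := by
    simp only [hf2]
    rw [hab, zero_add, div_eq_iff (pow_ne_zero _ hbne)]
    linear_combination (-b^2) * hba
  -- derivatives of pieces
  have hfd : ∀ z : ℝ, z + b ≠ 0 → HasDerivAt f (f1 z) z := by
    intro z hz
    have h1 : HasDerivAt (fun z : ℝ => z^2/2 + a*z) (z + a) z := by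
      have := ((hasDerivAt_pow 2 z).div_const 2).add ((hasDerivAt_id z).const_mul a)
      exact this.congr_deriv (by push_cast; ring)
    have h2 : HasDerivAt (fun z : ℝ => z + b) 1 z := by
      simpa using (hasDerivAt_id z).add_const b
    have key : ((z + a) * (z + b) - (z^2/2 + a*z) * 1)/(z + b)^2 = f1 z := by
      simp only [hf1]; congr 1; ring
    have := h1.div h2 hz
    rwa [key] at this
  have hf1d : ∀ z : ℝ, z + b ≠ 0 → HasDerivAt f1 (f2 z) z := by
    intro z hz
    have h1 : HasDerivAt (fun z : ℝ => z^2/2 + b*z + a*b) (z + b) z := by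
      have := (((hasDerivAt_pow 2 z).div_const 2).add ((hasDerivAt_id z).const_mul b)).add_const (a*b)
      exact this.congr_deriv (by push_cast; ring)
    have h2 : HasDerivAt (fun z : ℝ => (z + b)^2) (2*(z+b)) z := by
      have := ((hasDerivAt_id z).add_const b).pow 2
      exact this.congr_deriv (by simp [id])
    have hz2 : (z + b)^2 ≠ 0 := pow_ne_zero _ hz
    have key : ((z + b) * (z + b)^2 - (z^2/2 + b*z + a*b) * (2*(z + b)))/((z + b)^2)^2
        = f2 z := by
      simp only [hf2]
      rw [div_eq_div_iff (pow_ne_zero _ (pow_ne_zero _ hz)) (pow_ne_zero _ hz)]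
      ring
    have := h1.div h2 hz2
    rwa [key] at this
  have he0d : ∀ z : ℝ, HasDerivAt e0 (e1 z) z := by
    intro z
    simpa [he0, he1] using ((Real.hasDerivAt_exp z).sub_const 1).const_mul α
  have he1d : ∀ z : ℝ, HasDerivAt e1 (e1 z) z := by
    intro z
    simpa [he1] using (Real.hasDerivAt_exp z).const_mul α
  -- EqOn facts
  have hRIic : Set.EqOn R e0 (Set.Iic 0) := by
    intro z hz; rw [hR z, if_neg (not_lt.mpr hz)]
  have hRIci : Set.EqOn R f (Set.Ici 0) := by
    intro z hz
    rcases eq_or_lt_of_le (show (0:ℝ) ≤ z from hz) with h0 | h0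
    · rw [hR z, if_neg (not_lt.mpr h0.ge), ← h0, hf0]; simp
    · rw [hR z, if_pos h0]
  have hgIic : Set.EqOn g e1 (Set.Iic 0) := by
    intro z hz; simp only [hg]; rw [if_neg (not_lt.mpr hz)]
  have hgIci : Set.EqOn g f1 (Set.Ici 0) := by
    intro z hz
    rcases eq_or_lt_of_le (show (0:ℝ) ≤ z from hz) with h0 | h0
    · simp only [hg]; rw [if_neg (not_lt.mpr h0.ge), ← h0, hf10, he10]
    · simp only [hg]; rw [if_pos h0]
  have hhIic : Set.EqOn h e1 (Set.Iic 0) := by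
    intro z hz; simp only [hh]; rw [if_neg (not_lt.mpr hz)]
  have hhIci : Set.EqOn h f2 (Set.Ici 0) := by
    intro z hz
    rcases eq_or_lt_of_le (show (0:ℝ) ≤ z from hz) with h0 | h0
    · simp only [hh]; rw [if_neg (not_lt.mpr h0.ge), ← h0, hf20, he10]
    · simp only [hh]; rw [if_pos h0]
  -- positivity of z + b on relevant sets
  have hg0 : g 0 = α := by simp only [hg]; norm_num [he10]
  have hh0 : h 0 = α := by simp only [hh]; norm_num [he10]
  have hzb : ∀ z : ℝ, 0 ≤ z → z + b ≠ 0 := fun z hz => ne_of_gt (by linarith)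
  -- R has derivative g everywhere
  have hRd : ∀ z : ℝ, HasDerivAt R (g z) z := by
    intro z
    rcases lt_trichotomy z 0 with h0 | h0 | h0
    · have hev : R =ᶠ[nhds z] e0 := by
        filter_upwards [eventually_lt_nhds h0] with x hx using hRIic hx.le
      have : HasDerivAt R (e1 z) z := (he0d z).congr_of_eventuallyEq hev
      simpa only [hg, if_neg (not_lt.mpr h0.le)] using this
    · subst h0
      have h1 : HasDerivWithinAt R α (Set.Iic 0) 0 := by
        have := ((he0d 0).hasDerivWithinAt (s := Set.Iic 0)).congr hRIic (hRIic Set.self_mem_Iic)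
        rwa [he10] at this
      have h2 : HasDerivWithinAt R α (Set.Ici 0) 0 := by
        have := ((hfd 0 (hzb 0 le_rfl)).hasDerivWithinAt (s := Set.Ici 0)).congr hRIci
          (hRIci Set.self_mem_Ici)
        rwa [hf10] at this
      have := h1.union h2
      rw [Set.Iic_union_Ici, hasDerivWithinAt_univ] at this
      rw [hg0]; exact this
    · have hev : R =ᶠ[nhds z] f := by
        filter_upwards [eventually_gt_nhds h0] with x hx using hRIci hx.le
      have : HasDerivAt R (f1 z) z := (hfd z (hzb z h0.le)).congr_of_eventuallyEq hev
      simpa only [hg, if_pos h0] using this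
  have hderivR : deriv R = g := funext fun z => (hRd z).deriv
  -- g has derivative h everywhere
  have hgd : ∀ z : ℝ, HasDerivAt g (h z) z := by
    intro z
    rcases lt_trichotomy z 0 with h0 | h0 | h0
    · have hev : g =ᶠ[nhds z] e1 := by
        filter_upwards [eventually_lt_nhds h0] with x hx using hgIic hx.le
      have : HasDerivAt g (e1 z) z := (he1d z).congr_of_eventuallyEq hev
      simpa only [hh, if_neg (not_lt.mpr h0.le)] using this
    · subst h0
      have h1 : HasDerivWithinAt g α (Set.Iic 0) 0 := by
        have := ((he1d 0).hasDerivWithinAt (s := Set.Iic 0)).congr hgIic (hgIic Set.self_mem_Iic)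
        rwa [he10] at this
      have h2 : HasDerivWithinAt g α (Set.Ici 0) 0 := by
        have := ((hf1d 0 (hzb 0 le_rfl)).hasDerivWithinAt (s := Set.Ici 0)).congr hgIci
          (hgIci Set.self_mem_Ici)
        rwa [hf20] at this
      have := h1.union h2
      rw [Set.Iic_union_Ici, hasDerivWithinAt_univ] at this
      rw [hh0]; exact this
    · have hev : g =ᶠ[nhds z] f1 := by
        filter_upwards [eventually_gt_nhds h0] with x hx using hgIci hx.le
      have : HasDerivAt g (f2 z) z := (hf1d z (hzb z h0.le)).congr_of_eventuallyEq hev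
      simpa only [hh, if_pos h0] using this
  have hderivg : deriv g = h := funext fun z => (hgd z).deriv
  -- continuity of h
  have hcont : Continuous h := by
    rw [continuous_iff_continuousAt]
    intro z
    rcases lt_trichotomy z 0 with h0 | h0 | h0
    · have hev : h =ᶠ[nhds z] e1 := by
        filter_upwards [eventually_lt_nhds h0] with x hx using hhIic hx.le
      exact ContinuousAt.congr ((continuous_const.mul Real.continuous_exp).continuousAt) hev.symm
    · subst h0
      have hc1 : ContinuousWithinAt h (Set.Iic 0) 0 := by
        exact ((continuous_const.mul Real.continuous_exp).continuousAt.continuousWithinAt).congr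
          hhIic (hhIic Set.self_mem_Iic)
      have hc2 : ContinuousWithinAt h (Set.Ici 0) 0 := by
        have hcf2 : ContinuousAt f2 0 := by
          exact continuousAt_const.div
            (((continuous_id.add continuous_const).pow 3).continuousAt)
            (pow_ne_zero _ (hzb 0 le_rfl))
        exact (hcf2.continuousWithinAt).congr hhIci (hhIci Set.self_mem_Ici)
      have := hc1.union hc2
      rwa [Set.Iic_union_Ici, continuousWithinAt_univ] at this
    · have hev : h =ᶠ[nhds z] f2 := by
        filter_upwards [eventually_gt_nhds h0] with x hx using hhIci hx.le
      have hcf2 : ContinuousAt f2 z := by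
        exact continuousAt_const.div
          (((continuous_id.add continuous_const).pow 3).continuousAt)
          (pow_ne_zero _ (hzb z h0.le))
      exact hcf2.congr hev.symm
  -- assemble
  refine ⟨?_, ?_, ?_⟩
  · rw [show (2 : WithTop ℕ∞) = 1 + 1 from rfl, contDiff_succ_iff_deriv]
    refine ⟨fun z => (hRd z).differentiableAt, by simp, ?_⟩
    rw [hderivR, contDiff_one_iff_deriv]
    exact ⟨fun z => (hgd z).differentiableAt, hderivg ▸ hcont⟩
  · rw [hderivR, hg0]
  · rw [hderivR, hderivg, hh0]
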